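/- For every resource contribution game G, the set of contentious profiles equals the union over all players of the profiles contentious for that player: cont-prof(G) = ⋃_{i∈N} cont-prof(G,i). -/

import Mathlib

open scoped Classical

/-- A resource contribution game over atomic resource type `Res` with player set `ι`:
each player has a goal (a resource bundle, i.e. a multiset of atomic resources) and
an endowment (a resource bag, i.e. a multiset of resource bundles). -/
structure RCG (Res ι : Type*) where
  goal : ι → Multiset Res
  endow : ι → Multiset (Multiset Res)

namespace RCG

variable {Res ι : Type*} [Fintype ι]

/-- A profile assigns to each player a bag (his contribution). -/
abbrev Profile (Res ι : Type*) := ι → Multiset (Multiset Res)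

/-- Outcome of a profile: the multiset sum of all contributions. -/
def out (P : Profile Res ι) : Multiset (Multiset Res) := ∑ i, P i

/-- The bag `X` can be transformed into the bundle `B`: `♭(B) ⊆ ♭•(X)`. -/
def Trans (X : Multiset (Multiset Res)) (B : Multiset Res) : Prop := B ≤ X.sum

/-- Player `i` is potentially satisfied by profile `P`. -/
def Psat (G : RCG Res ι) (P : Profile Res ι) (i : ι) : Prop :=
  Trans (out P) (G.goal i)

/-- The set of players potentially satisfied by `P`. -/
noncomputable def psatPlayers (G : RCG Res ι) (P : Profile Res ι) : Finset ι :=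
  Finset.univ.filter fun i => Psat G P i

/-- The profile `P` is contentious. -/
def Contentious (G : RCG Res ι) (P : Profile Res ι) : Prop :=
  ¬ Trans (out P) (∑ j ∈ psatPlayers G P, G.goal j)

/-- Restriction of bundle `B` to the resource types occurring in `C`. -/
noncomputable def restr (B C : Multiset Res) : Multiset Res := B.filter (· ∈ C)

/-- The profile `P` is contentious for player `i`. -/
def ContentiousFor (G : RCG Res ι) (P : Profile Res ι) (i : ι) : Prop :=
  Psat G P i ∧ ¬ Trans (out P) (∑ j ∈ psatPlayers G P, restr (G.goal j) (G.goal i))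

/-- The three kinds of preferences: contention-tolerant, (public) contention-averse,
private contention-averse. -/
inductive Pref | ct | ca | pca

/-- `P` is a good profile for player `i` according to preference kind `pref`. -/
def Good (pref : Pref) (G : RCG Res ι) (P : Profile Res ι) (i : ι) : Prop :=
  match pref with
  | .ct => Psat G P i
  | .ca => Psat G P i ∧ ¬ Contentious G P
  | .pca => Psat G P i ∧ ¬ ContentiousFor G P i

/-- Player `i` strictly prefers `P` over `Q` (i.e. `Q ≺^pref_i P`). -/
def Prefers (pref : Pref) (G : RCG Res ι) (i : ι) (Q P : Profile Res ι) : Prop :=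
  (¬ Good pref G P i ∧ ¬ Good pref G Q i ∧ P i < Q i) ∨
  (Good pref G P i ∧ ¬ Good pref G Q i) ∨
  (Good pref G P i ∧ Good pref G Q i ∧ P i < Q i)

/-- `C` is a profitable deviation for player `i` from profile `P`. -/
noncomputable def ProfDev (pref : Pref) (G : RCG Res ι) (P : Profile Res ι) (i : ι)
    (C : Multiset (Multiset Res)) : Prop :=
  C ≤ G.endow i ∧ Prefers pref G i P (Function.update P i C)

/-- `P` is a pure Nash equilibrium of `G` according to `pref`:
`P` is a profile of `G` and no player has a profitable deviation. -/
noncomputable def NE (pref : Pref) (G : RCG Res ι) (P : Profile Res ι) : Prop :=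
  (∀ i, P i ≤ G.endow i) ∧ ∀ i C, ¬ ProfDev pref G P i C

/-- `G` is an RCG with endowments as bags of atomic resources. -/
def IsRCGBAR (G : RCG Res ι) : Prop :=
  ∀ i, ∀ B ∈ G.endow i, ∃ r : Res, B = {r}

/-- `G` has independent objectives. -/
def IndepObjectives (G : RCG Res ι) : Prop :=
  ∀ i j : ι, i ≠ j → ∀ r : Res, r ∈ G.goal i → r ∉ G.goal j

end RCG

/-- a profile of `G` is contentious iff it is contentious for some player. -/
theorem contentious_iff_exists_contentiousFor {Res ι : Type*} [Fintype ι]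
    (G : RCG Res ι) (P : RCG.Profile Res ι) (hP : ∀ i, P i ≤ G.endow i) :
    RCG.Contentious G P ↔ ∃ i : ι, RCG.ContentiousFor G P i := by

  classical
  unfold RCG.Contentious RCG.ContentiousFor RCG.Trans
  constructor
  · intro h
    rw [Multiset.le_iff_count] at h
    push_neg at h
    obtain ⟨r, hr⟩ := h
    have hrpos : 0 < Multiset.count r (∑ j ∈ RCG.psatPlayers G P, G.goal j) :=
      lt_of_le_of_lt (Nat.zero_le _) hr
    have hrmem : r ∈ ∑ j ∈ RCG.psatPlayers G P, G.goal j := Multiset.count_pos.mp hrpos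
    have : ∃ i ∈ RCG.psatPlayers G P, r ∈ G.goal i := Multiset.mem_sum.mp hrmem
    obtain ⟨i, hi, hri⟩ := this
    refine ⟨i, ?_, ?_⟩
    · have := Finset.mem_filter.mp hi
      exact this.2
    · intro hle
      rw [Multiset.le_iff_count] at hle
      have key : Multiset.count r (∑ j ∈ RCG.psatPlayers G P, RCG.restr (G.goal j) (G.goal i))
          = Multiset.count r (∑ j ∈ RCG.psatPlayers G P, G.goal j) := by
        rw [Multiset.count_sum', Multiset.count_sum']
        apply Finset.sum_congr rfl
        intro j _
        simp [RCG.restr, Multiset.count_filter, hri]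
      have := hle r
      rw [key] at this
      exact absurd this (not_le.mpr hr)
  · rintro ⟨i, hpsat, hnle⟩
    intro hle
    apply hnle
    refine le_trans ?_ hle
    apply Finset.sum_le_sum
    intro j _
    exact Multiset.filter_le _ _
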